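/- For all positive integers m, s, all natural numbers k, l, and all complex numbers x, ξ, ζ, y, z: _LH_{k+l}^{(m,s)}(x,ξ,ζ) = Σ_{n=0}^{k} Σ_{r=0}^{l} C(k,n) C(l,r) · g_{n+r}^s(ξ−y, ζ−z) · _LH_{k+l-n-r}^{(m,s)}(x,y,z), where C(a,b) denotes the ordinary binomial coefficient. -/

import Mathlib

/-- The Gould-Hopper polynomial g_n^m(x,y) = n! Σ_{k=0}^{⌊n/m⌋} x^{n-mk} y^k/(k!(n-mk)!). -/
noncomputable def gouldHopper (m : ℕ) (x y : ℂ) (n : ℕ) : ℂ :=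
  (Nat.factorial n : ℂ) * ∑ k ∈ Finset.range (n / m + 1),
    x ^ (n - m * k) * y ^ k /
      ((Nat.factorial k : ℂ) * (Nat.factorial (n - m * k) : ℂ))

/-- The 2D Laguerre polynomial _mL_n(x,y) = n! Σ_{k=0}^{⌊n/m⌋} x^k y^{n-mk}/((k!)² (n-mk)!). -/
noncomputable def lag2D (m : ℕ) (x y : ℂ) (n : ℕ) : ℂ :=
  (Nat.factorial n : ℂ) * ∑ k ∈ Finset.range (n / m + 1),
    x ^ k * y ^ (n - m * k) /
      ((Nat.factorial k : ℂ) ^ 2 * (Nat.factorial (n - m * k) : ℂ))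

/-- The Laguerre-Gould-Hopper polynomial
_LH_n^{(m,s)}(x,y,z) = n! Σ_{k=0}^{⌊n/s⌋} z^k _mL_{n-sk}(x,y)/(k!(n-sk)!). -/
noncomputable def LGH (m s : ℕ) (x y z : ℂ) (n : ℕ) : ℂ :=
  (Nat.factorial n : ℂ) * ∑ k ∈ Finset.range (n / s + 1),
    z ^ k * lag2D m x y (n - s * k) /
      ((Nat.factorial k : ℂ) * (Nat.factorial (n - s * k) : ℂ))

open Finset PowerSeries

section helpers
lemma factC_ne (n : ℕ) : ((Nat.factorial n : ℂ)) ≠ 0 := by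
  exact_mod_cast Nat.cast_ne_zero.mpr (Nat.factorial_ne_zero n)

lemma chooseC {j t : ℕ} (h : j ≤ t) :
    (Nat.choose t j : ℂ) = (Nat.factorial t : ℂ) /
      ((Nat.factorial j : ℂ) * (Nat.factorial (t - j) : ℂ)) := by
  have h1 : ((Nat.choose t j * Nat.factorial j * Nat.factorial (t - j) : ℕ) : ℂ)
      = (Nat.factorial t : ℂ) := by
    exact_mod_cast congrArg (Nat.cast : ℕ → ℂ) (Nat.choose_mul_factorial_mul_factorial h)
  push_cast at h1
  rw [eq_div_iff (mul_ne_zero (factC_ne j) (factC_ne (t - j)))]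
  linear_combination h1

-- exp convolution
lemma conv_exp (a b : ℂ) (t : ℕ) :
    ∑ j ∈ range (t + 1), a ^ j / (Nat.factorial j : ℂ) *
      (b ^ (t - j) / (Nat.factorial (t - j) : ℂ)) =
    (a + b) ^ t / (Nat.factorial t : ℂ) := by
  rw [add_pow, Finset.sum_div]
  refine Finset.sum_congr rfl fun j hj => ?_
  have hj' : j ≤ t := Nat.lt_succ_iff.mp (Finset.mem_range.mp hj)
  rw [chooseC hj']
  have := factC_ne j; have := factC_ne (t - j); have := factC_ne t
  field_simp

-- sifting lemma
lemma sift {s : ℕ} (hs : 0 < s) (n : ℕ) (g : ℕ → ℂ) :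
    ∑ k ∈ range (n + 1), (if s ∣ k then g k else 0) =
    ∑ j ∈ range (n / s + 1), g (s * j) := by
  rw [← Finset.sum_filter]
  have hset : (range (n + 1)).filter (fun k => s ∣ k) =
      (range (n / s + 1)).image (fun j => s * j) := by
    ext k
    simp only [Finset.mem_filter, Finset.mem_range, Finset.mem_image, Nat.lt_succ_iff]
    constructor
    · rintro ⟨hk, t, rfl⟩
      exact ⟨t, Nat.le_div_iff_mul_le hs |>.mpr (by linarith [hk]), rfl⟩
    · rintro ⟨t, ht, rfl⟩
      exact ⟨by calc s * t ≤ s * (n / s) := Nat.mul_le_mul_left s ht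
              _ ≤ n := Nat.mul_div_le n s, ⟨t, rfl⟩⟩
  rw [hset, Finset.sum_image]
  intro a _ b _ hab
  exact Nat.eq_of_mul_eq_mul_left hs hab

-- padding lemma
lemma pad {d : ℕ} (hd : 0 < d) (N : ℕ) (g : ℕ → ℂ) :
    ∑ k ∈ range (N / d + 1), g k =
    ∑ k ∈ range (N + 1), (if d * k ≤ N then g k else 0) := by
  rw [← Finset.sum_filter]
  congr 1
  ext k
  simp only [Finset.mem_filter, Finset.mem_range, Nat.lt_succ_iff]
  constructor
  · intro hk
    have h1 : d * k ≤ N := by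
      calc d * k ≤ d * (N / d) := Nat.mul_le_mul_left d hk
        _ ≤ N := Nat.mul_div_le N d
    exact ⟨le_trans (Nat.le_mul_of_pos_left k hd) h1, h1⟩
  · rintro ⟨_, h2⟩
    exact (Nat.le_div_iff_mul_le hd).mpr (by linarith [h2])
end helpers

noncomputable def Eser (a : ℂ) : PowerSeries ℂ :=
  PowerSeries.mk fun n => a ^ n / (Nat.factorial n : ℂ)

noncomputable def Sser (s : ℕ) (b : ℂ) : PowerSeries ℂ :=
  PowerSeries.mk fun n =>
    if s ∣ n then b ^ (n / s) / (Nat.factorial (n / s) : ℂ) else 0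

noncomputable def Cser (m : ℕ) (x : ℂ) : PowerSeries ℂ :=
  PowerSeries.mk fun n =>
    if m ∣ n then x ^ (n / m) / (Nat.factorial (n / m) : ℂ) ^ 2 else 0

noncomputable def Gser (s : ℕ) (a b : ℂ) : PowerSeries ℂ :=
  PowerSeries.mk fun n => gouldHopper s a b n / (Nat.factorial n : ℂ)

noncomputable def Lser (m s : ℕ) (x y z : ℂ) : PowerSeries ℂ :=
  PowerSeries.mk fun n => LGH m s x y z n / (Nat.factorial n : ℂ)

lemma Eser_mul (a b : ℂ) : Eser a * Eser b = Eser (a + b) := by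
  ext n
  rw [PowerSeries.coeff_mul, Finset.Nat.sum_antidiagonal_eq_sum_range_succ_mk]
  simp only [Eser, PowerSeries.coeff_mk]
  exact conv_exp a b n

lemma Sser_mul {s : ℕ} (hs : 0 < s) (b b' : ℂ) :
    Sser s b * Sser s b' = Sser s (b + b') := by
  ext n
  rw [PowerSeries.coeff_mul, Finset.Nat.sum_antidiagonal_eq_sum_range_succ_mk]
  simp only [Sser, PowerSeries.coeff_mk, ite_mul, zero_mul]
  rw [sift hs]
  by_cases h : s ∣ n
  · obtain ⟨t, rfl⟩ := h
    have hd : s * t / s = t := Nat.mul_div_cancel_left t hs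
    rw [if_pos ⟨t, rfl⟩, hd]
    have key : ∀ j ∈ range (t + 1),
        (b ^ (s * j / s) / (Nat.factorial (s * j / s) : ℂ)) *
          (if s ∣ s * t - s * j then
            b' ^ ((s * t - s * j) / s) / (Nat.factorial ((s * t - s * j) / s) : ℂ)
          else 0)
        = b ^ j / (Nat.factorial j : ℂ) *
            (b' ^ (t - j) / (Nat.factorial (t - j) : ℂ)) := by
      intro j hj
      have hj' : j ≤ t := Nat.lt_succ_iff.mp (Finset.mem_range.mp hj)
      have hsub : s * t - s * j = s * (t - j) := (Nat.mul_sub ..).symm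
      rw [hsub, if_pos (dvd_mul_right s (t - j)), Nat.mul_div_cancel_left j hs,
        Nat.mul_div_cancel_left (t - j) hs]
    rw [Finset.sum_congr rfl key]
    exact conv_exp b b' t
  · rw [if_neg h]
    refine Finset.sum_eq_zero fun j hj => ?_
    have hj' : j ≤ n / s := Nat.lt_succ_iff.mp (Finset.mem_range.mp hj)
    have hle : s * j ≤ n := le_trans (Nat.mul_le_mul_left s hj') (Nat.mul_div_le n s)
    have : ¬ s ∣ n - s * j := by
      intro hdvd
      exact h (Nat.sub_add_cancel hle ▸ hdvd.add (dvd_mul_right s j))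
    rw [if_neg this, mul_zero]

lemma Gser_eq {s : ℕ} (hs : 0 < s) (a b : ℂ) :
    Gser s a b = Sser s b * Eser a := by
  ext n
  rw [PowerSeries.coeff_mul, Finset.Nat.sum_antidiagonal_eq_sum_range_succ_mk]
  simp only [Gser, Sser, Eser, PowerSeries.coeff_mk, ite_mul, zero_mul]
  rw [sift hs]
  rw [gouldHopper, mul_div_cancel_left₀ _ (factC_ne n)]
  refine Finset.sum_congr rfl fun j hj => ?_
  rw [Nat.mul_div_cancel_left j hs]
  have := factC_ne j; have := factC_ne (n - s * j)
  field_simp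

-- swap lemma part 1 : padding a double sum
lemma pad2 {m s : ℕ} (hm : 0 < m) (hs : 0 < s) (n : ℕ) (f : ℕ → ℕ → ℂ) :
    ∑ k ∈ range (n / s + 1), ∑ j ∈ range ((n - s * k) / m + 1), f j k =
    ∑ k ∈ range (n + 1), ∑ j ∈ range (n + 1),
      (if m * j + s * k ≤ n then f j k else 0) := by
  rw [pad hs n]
  refine Finset.sum_congr rfl fun k hk => ?_
  by_cases hkn : s * k ≤ n
  · rw [if_pos hkn, pad hm (n - s * k)]
    rw [Finset.sum_subset (Finset.range_subset_range.mpr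
      (Nat.succ_le_succ (Nat.sub_le n (s * k))))]
    · refine Finset.sum_congr rfl fun j hj => ?_
      exact if_congr (Nat.le_sub_iff_add_le hkn) rfl rfl
    · intro j hj hj'
      rw [if_neg]
      intro hcon
      apply hj'
      rw [Finset.mem_range, Nat.lt_succ_iff] at *
      calc j ≤ m * j := Nat.le_mul_of_pos_left j hm
        _ ≤ n - s * k := hcon
  · rw [if_neg hkn]
    refine (Finset.sum_eq_zero fun j hj => ?_).symm
    rw [if_neg]
    intro hcon
    exact hkn (le_trans (Nat.le_add_left _ _) hcon)

lemma swap_sum {m s : ℕ} (hm : 0 < m) (hs : 0 < s) (n : ℕ) (f : ℕ → ℕ → ℂ) :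
    ∑ k ∈ range (n / s + 1), ∑ j ∈ range ((n - s * k) / m + 1), f j k =
    ∑ j ∈ range (n / m + 1), ∑ k ∈ range ((n - m * j) / s + 1), f j k := by
  rw [pad2 hm hs n f, pad2 hs hm n (fun k j => f j k), Finset.sum_comm]
  refine Finset.sum_congr rfl fun j _ => Finset.sum_congr rfl fun k _ => ?_
  rw [add_comm (m * j) (s * k)]

lemma Lser_eq {m s : ℕ} (hm : 0 < m) (hs : 0 < s) (x y z : ℂ) :
    Lser m s x y z = Cser m x * Gser s y z := by
  ext n
  rw [PowerSeries.coeff_mul, Finset.Nat.sum_antidiagonal_eq_sum_range_succ_mk]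
  simp only [Lser, Cser, Gser, PowerSeries.coeff_mk, ite_mul, zero_mul]
  rw [sift hm]
  rw [LGH, mul_div_cancel_left₀ _ (factC_ne n)]
  -- expand lag2D inside LHS
  have lhs_eq : ∀ k ∈ range (n / s + 1),
      z ^ k * lag2D m x y (n - s * k) /
        ((Nat.factorial k : ℂ) * (Nat.factorial (n - s * k) : ℂ)) =
      ∑ j ∈ range ((n - s * k) / m + 1),
        x ^ j * y ^ (n - s * k - m * j) * z ^ k /
          ((Nat.factorial j : ℂ) ^ 2 * (Nat.factorial (n - s * k - m * j) : ℂ)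
            * (Nat.factorial k : ℂ)) := by
    intro k hk
    rw [lag2D]
    rw [div_eq_iff (mul_ne_zero (factC_ne k) (factC_ne (n - s * k)))]
    rw [Finset.sum_mul, Finset.mul_sum, Finset.mul_sum]
    refine Finset.sum_congr rfl fun j hj => ?_
    have := factC_ne j; have := factC_ne (n - s * k - m * j); have := factC_ne k
    field_simp
  rw [Finset.sum_congr rfl lhs_eq, swap_sum hm hs]
  refine Finset.sum_congr rfl fun j hj => ?_
  have hjn : m * j ≤ n := by
    have := Nat.lt_succ_iff.mp (Finset.mem_range.mp hj)
    exact le_trans (Nat.mul_le_mul_left m this) (Nat.mul_div_le n m)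
  rw [Nat.mul_div_cancel_left j hm]
  rw [gouldHopper, mul_div_cancel_left₀ _ (factC_ne (n - m * j)), Finset.mul_sum]
  refine Finset.sum_congr rfl fun k hk => ?_
  have hsub : n - s * k - m * j = n - m * j - s * k := by omega
  rw [hsub]
  have := factC_ne j; have := factC_ne k
  have := factC_ne (n - m * j); have := factC_ne (n - m * j - s * k)
  field_simp

lemma series_id {m s : ℕ} (hm : 0 < m) (hs : 0 < s) (x ξ ζ y z : ℂ) :
    Lser m s x ξ ζ = Gser s (ξ - y) (ζ - z) * Lser m s x y z := by
  rw [Lser_eq hm hs, Lser_eq hm hs, Gser_eq hs, Gser_eq hs, Gser_eq hs]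
  have h1 : Sser s ζ = Sser s (ζ - z) * Sser s z := by
    rw [Sser_mul hs, sub_add_cancel]
  have h2 : Eser ξ = Eser (ξ - y) * Eser y := by
    rw [Eser_mul, sub_add_cancel]
  rw [h1, h2]; ring

lemma lemmaA {m s : ℕ} (hm : 0 < m) (hs : 0 < s) (x ξ ζ y z : ℂ) (N : ℕ) :
    LGH m s x ξ ζ N = ∑ j ∈ range (N + 1),
      (Nat.choose N j : ℂ) * gouldHopper s (ξ - y) (ζ - z) j *
        LGH m s x y z (N - j) := by
  have h := congrArg (PowerSeries.coeff N) (series_id hm hs x ξ ζ y z)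
  rw [PowerSeries.coeff_mul, Finset.Nat.sum_antidiagonal_eq_sum_range_succ_mk] at h
  simp only [Lser, Gser, PowerSeries.coeff_mk] at h
  calc LGH m s x ξ ζ N
      = (Nat.factorial N : ℂ) * (LGH m s x ξ ζ N / (Nat.factorial N : ℂ)) := by
        rw [mul_div_cancel₀ _ (factC_ne N)]
    _ = (Nat.factorial N : ℂ) * ∑ j ∈ range (N + 1),
          gouldHopper s (ξ - y) (ζ - z) j / (Nat.factorial j : ℂ) *
            (LGH m s x y z (N - j) / (Nat.factorial (N - j) : ℂ)) := by rw [h]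
    _ = _ := by
        rw [Finset.mul_sum]
        refine Finset.sum_congr rfl fun j hj => ?_
        have hj' : j ≤ N := Nat.lt_succ_iff.mp (Finset.mem_range.mp hj)
        rw [chooseC hj']
        have := factC_ne j; have := factC_ne (N - j); have := factC_ne N
        field_simp

lemma vandermonde_regroup (k l : ℕ) (F : ℕ → ℂ) :
    ∑ n ∈ range (k + 1), ∑ r ∈ range (l + 1),
      (Nat.choose k n : ℂ) * (Nat.choose l r : ℂ) * F (n + r) =
    ∑ j ∈ range (k + l + 1), (Nat.choose (k + l) j : ℂ) * F j := by
  rw [← Finset.sum_product']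
  rw [← Finset.sum_fiberwise_of_maps_to (g := fun p : ℕ × ℕ => p.1 + p.2)
    (t := range (k + l + 1)) (fun p hp => by
      simp only [Finset.mem_product, Finset.mem_range, Nat.lt_succ_iff] at hp ⊢
      omega)]
  refine Finset.sum_congr rfl fun j hj => ?_
  have step1 : ∀ p ∈ (range (k+1) ×ˢ range (l+1)).filter (fun p => p.1 + p.2 = j),
      (Nat.choose k p.1 : ℂ) * (Nat.choose l p.2 : ℂ) * F (p.1 + p.2) =
      ((Nat.choose k p.1 * Nat.choose l p.2 : ℕ) : ℂ) * F j := by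
    intro p hp
    rw [(Finset.mem_filter.mp hp).2]
    push_cast; ring
  rw [Finset.sum_congr rfl step1, ← Finset.sum_mul]
  congr 1
  rw [← Nat.cast_sum]
  congr 1
  rw [Nat.add_choose_eq]
  refine Finset.sum_subset ?_ ?_
  · intro p hp
    rw [Finset.mem_filter] at hp
    exact Finset.HasAntidiagonal.mem_antidiagonal.mpr hp.2
  · intro p hp hp'
    rw [Finset.HasAntidiagonal.mem_antidiagonal] at hp
    rw [Finset.mem_filter, Finset.mem_product, Finset.mem_range, Finset.mem_range,
      Nat.lt_succ_iff, Nat.lt_succ_iff] at hp'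
    simp only [hp, and_true, not_and] at hp'
    by_cases h1 : p.1 ≤ k
    · have h2 : ¬ p.2 ≤ l := by tauto
      rw [Nat.choose_eq_zero_of_lt (show l < p.2 by omega), mul_zero]
    · rw [Nat.choose_eq_zero_of_lt (show k < p.1 by omega), zero_mul]

theorem LGH_connection (m s : ℕ) (hm : 0 < m) (hs : 0 < s)
    (k l : ℕ) (x ξ ζ y z : ℂ) :
    LGH m s x ξ ζ (k + l) =
      ∑ n ∈ Finset.range (k + 1), ∑ r ∈ Finset.range (l + 1),
        (Nat.choose k n : ℂ) * (Nat.choose l r : ℂ) *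
          gouldHopper s (ξ - y) (ζ - z) (n + r) * LGH m s x y z (k + l - n - r) := by
  have hF : ∀ n ∈ range (k + 1), ∀ r ∈ range (l + 1),
      (Nat.choose k n : ℂ) * (Nat.choose l r : ℂ) *
        gouldHopper s (ξ - y) (ζ - z) (n + r) * LGH m s x y z (k + l - n - r) =
      (Nat.choose k n : ℂ) * (Nat.choose l r : ℂ) *
        (gouldHopper s (ξ - y) (ζ - z) (n + r) * LGH m s x y z (k + l - (n + r))) := by
    intro n _ r _
    rw [Nat.sub_sub]
    ring
  rw [Finset.sum_congr rfl fun n hn => Finset.sum_congr rfl fun r hr => hF n hn r hr]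
  rw [vandermonde_regroup k l
    (fun j => gouldHopper s (ξ - y) (ζ - z) j * LGH m s x y z (k + l - j))]
  rw [lemmaA hm hs x ξ ζ y z (k + l)]
  exact Finset.sum_congr rfl fun j _ => by ring
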